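/- arXiv:2312.16404 — 3 statements merged into one kernel-verified Lean document; each statement's English description precedes it below -/
import Mathlib

section
/- Let n ≥ 2 be an integer, a ∈ B_n, ξ ∈ ∂B_n and c > 0. Then the function f(x) = c · [φ_a(x), a]^{n−2} · P_ξ(φ_a(x)) is positive and harmonic on B_n and satisfies the equality |(|x|²−1)∇f(x) + (n−2) x f(x)| = n f(x) for all x ∈ B_n. -/
open Metric EuclideanSpace Real
open scoped RealInnerProductSpace Topology

/-- The quantity `[x,a] = (1 + |a|²|x|² − 2⟨a,x⟩)^{1/2}` (equal to the Clifford norm `|1 − x·ā|`). -/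
noncomputable def bracket {n : ℕ} (x a : EuclideanSpace ℝ (Fin n)) : ℝ :=
  Real.sqrt (1 + ‖a‖ ^ 2 * ‖x‖ ^ 2 - 2 * inner ℝ a x)

/-- The Möbius transformation `φ_a(x) = ((1−|a|²)(a−x) + |a−x|² a)/[x,a]²` of the unit ball. -/
noncomputable def phi {n : ℕ} (a x : EuclideanSpace ℝ (Fin n)) : EuclideanSpace ℝ (Fin n) :=
  ((bracket x a) ^ 2)⁻¹ • ((1 - ‖a‖ ^ 2) • (a - x) + ‖a - x‖ ^ 2 • a)

/-- The Laplacian `Δf(x) = ∑ i ∂²f/∂x_i²(x)` of a (possibly vector-valued) function. -/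
noncomputable def lap {n : ℕ} {F : Type*} [NormedAddCommGroup F] [NormedSpace ℝ F]
    (f : EuclideanSpace ℝ (Fin n) → F) (x : EuclideanSpace ℝ (Fin n)) : F :=
  ∑ i : Fin n,
    fderiv ℝ (fderiv ℝ f) x (EuclideanSpace.single i (1 : ℝ)) (EuclideanSpace.single i (1 : ℝ))

/-- `f` is harmonic on the open unit ball: it is `C²` there and satisfies Laplace's equation. -/
def IsHarmonicOnBall {n : ℕ} {F : Type*} [NormedAddCommGroup F] [NormedSpace ℝ F]
    (f : EuclideanSpace ℝ (Fin n) → F) : Prop :=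
  ContDiffOn ℝ 2 f (ball 0 1) ∧
    ∀ x ∈ ball (0 : EuclideanSpace ℝ (Fin n)) 1, lap f x = 0

/-- The hyperbolic metric `d_{B_n}(x,y) = 2 tanh⁻¹(|φ_y(x)|) = log((1+|φ_y(x)|)/(1−|φ_y(x)|))`. -/
noncomputable def hypDist {n : ℕ} (x y : EuclideanSpace ℝ (Fin n)) : ℝ :=
  Real.log ((1 + ‖phi y x‖) / (1 - ‖phi y x‖))

/-- The Poisson kernel `P_ξ(x) = (1−|x|²)/|x−ξ|^n`. -/
noncomputable def poisson {n : ℕ} (ξ x : EuclideanSpace ℝ (Fin n)) : ℝ :=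
  (1 - ‖x‖ ^ 2) / ‖x - ξ‖ ^ n

/-- The volume of the unit ball in `ℝ^k`. -/
noncomputable def volB (k : ℕ) : ℝ :=
  (MeasureTheory.volume (ball (0 : EuclideanSpace ℝ (Fin k)) 1)).toReal

namespace ExtremalAux

variable {n : ℕ}

local notation "E" => EuclideanSpace ℝ (Fin n)

noncomputable def s2 (a x : E) : ℝ := 1 + ‖a‖ ^ 2 * ‖x‖ ^ 2 - 2 * ⟪a, x⟫

lemma bracket_eq (a x : E) : bracket x a = Real.sqrt (s2 a x) := rfl

lemma s2_pos {a x : E} (h : ‖a‖ * ‖x‖ < 1) : 0 < s2 a x := by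
  have h1 : ⟪a, x⟫ ≤ ‖a‖ * ‖x‖ := real_inner_le_norm a x
  have h2 : 0 ≤ ‖a‖ * ‖x‖ := mul_nonneg (norm_nonneg a) (norm_nonneg x)
  unfold s2; nlinarith

lemma bracket_sq {a x : E} (h : 0 < s2 a x) : bracket x a ^ 2 = s2 a x :=
  Real.sq_sqrt h.le

lemma bracket_pos {a x : E} (h : 0 < s2 a x) : 0 < bracket x a := Real.sqrt_pos.2 h

lemma phi_eq {a x : E} (h : 0 < s2 a x) :
    phi a x = (s2 a x)⁻¹ • ((1 - ‖a‖ ^ 2) • (a - x) + ‖a - x‖ ^ 2 • a) := by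
  rw [phi, bracket_sq h]

lemma inner_phi {a x : E} (h : 0 < s2 a x) (v : E) :
    ⟪phi a x, v⟫ = ((1 - ‖a‖ ^ 2) * (⟪a, v⟫ - ⟪x, v⟫) + ‖a - x‖ ^ 2 * ⟪a, v⟫) / s2 a x := by
  rw [phi_eq h]
  rw [real_inner_smul_left, inner_add_left, real_inner_smul_left, real_inner_smul_left,
    inner_sub_left]
  rw [div_eq_inv_mul]

lemma norm_phi_sq {a x : E} (h : 0 < s2 a x) :
    ‖phi a x‖ ^ 2 = ‖a - x‖ ^ 2 / s2 a x := by
  have h1 : ‖phi a x‖ ^ 2 = ⟪phi a x, phi a x⟫ := (real_inner_self_eq_norm_sq _).symm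
  have h2 := inner_phi h (phi a x)
  have h3 : ⟪a, phi a x⟫ = ((1 - ‖a‖ ^ 2) * (⟪a, a⟫ - ⟪x, a⟫) + ‖a - x‖ ^ 2 * ⟪a, a⟫) / s2 a x := by
    rw [real_inner_comm (phi a x) a, inner_phi h a]
  have h4 : ⟪x, phi a x⟫ = ((1 - ‖a‖ ^ 2) * (⟪a, x⟫ - ⟪x, x⟫) + ‖a - x‖ ^ 2 * ⟪a, x⟫) / s2 a x := by
    rw [real_inner_comm (phi a x) x, inner_phi h x]
  rw [h1, h2, h3, h4, real_inner_self_eq_norm_sq a, real_inner_self_eq_norm_sq x,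
    norm_sub_sq_real a x, real_inner_comm a x]
  unfold s2 at h ⊢
  generalize hg : (⟪a, x⟫ : ℝ) = t at h ⊢
  have hne : 1 + ‖a‖ ^ 2 * ‖x‖ ^ 2 - 2 * t ≠ 0 := ne_of_gt h
  field_simp
  have hne' : 1 + ‖a‖ ^ 2 * ‖x‖ ^ 2 - t * 2 ≠ 0 := by rw [mul_comm t]; exact hne
  rw [div_eq_div_iff (pow_ne_zero 2 hne') hne']
  ring

lemma one_sub_norm_phi_sq {a x : E} (h : 0 < s2 a x) :
    1 - ‖phi a x‖ ^ 2 = (1 - ‖a‖ ^ 2) * (1 - ‖x‖ ^ 2) / s2 a x := by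
  rw [norm_phi_sq h, norm_sub_sq_real a x]
  unfold s2 at h ⊢
  generalize hg : (⟪a, x⟫ : ℝ) = t at h ⊢
  have hne : 1 + ‖a‖ ^ 2 * ‖x‖ ^ 2 - 2 * t ≠ 0 := ne_of_gt h
  field_simp
  ring

lemma s2_phi {a x : E} (h : 0 < s2 a x) :
    s2 a (phi a x) = (1 - ‖a‖ ^ 2) ^ 2 / s2 a x := by
  have h3 : ⟪a, phi a x⟫ = ((1 - ‖a‖ ^ 2) * (⟪a, a⟫ - ⟪x, a⟫) + ‖a - x‖ ^ 2 * ⟪a, a⟫) / s2 a x := by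
    rw [real_inner_comm (phi a x) a, inner_phi h a]
  rw [show s2 a (phi a x) = 1 + ‖a‖ ^ 2 * ‖phi a x‖ ^ 2 - 2 * ⟪a, phi a x⟫ from rfl,
    norm_phi_sq h, h3, real_inner_self_eq_norm_sq a, real_inner_comm a x,
    norm_sub_sq_real a x]
  unfold s2 at h ⊢
  generalize hg : (⟪a, x⟫ : ℝ) = t at h ⊢
  have hne : 1 + ‖a‖ ^ 2 * ‖x‖ ^ 2 - 2 * t ≠ 0 := ne_of_gt h
  field_simp
  ring

lemma bracket_phi {a x : E} (ha : ‖a‖ < 1) (h : 0 < s2 a x) :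
    bracket (phi a x) a = (1 - ‖a‖ ^ 2) / bracket x a := by
  have hb := bracket_pos h
  have hK : (0:ℝ) < 1 - ‖a‖ ^ 2 := by nlinarith [norm_nonneg a]
  rw [bracket_eq, s2_phi h, ← bracket_sq h, ← div_pow,
    Real.sqrt_sq (by positivity)]


lemma sq_eq_of_nonneg {u v : ℝ} (hu : 0 ≤ u) (hv : 0 ≤ v) (h : u ^ 2 = v ^ 2) : u = v := by
  rw [← Real.sqrt_sq hu, h, Real.sqrt_sq hv]

lemma s2_unit {a ξ : E} (hξ : ‖ξ‖ = 1) : s2 a ξ = ‖a - ξ‖ ^ 2 := by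
  unfold s2
  rw [norm_sub_sq_real a ξ, hξ]
  ring

lemma dist_phi_xi {a x ξ : E} (hx : 0 < s2 a x) (hξ : ‖ξ‖ = 1) (hsξ : 0 < s2 a ξ) :
    ‖phi a x - ξ‖ ^ 2 = s2 a ξ * ‖x - phi a ξ‖ ^ 2 / s2 a x := by
  have hX2 : ‖ξ‖ ^ 2 = 1 := by rw [hξ]; norm_num
  have e1 : ‖phi a x - ξ‖ ^ 2 = ‖phi a x‖ ^ 2 - 2 * ⟪phi a x, ξ⟫ + 1 := by
    rw [norm_sub_sq_real, hX2]
  have e2 : ‖x - phi a ξ‖ ^ 2 = ‖x‖ ^ 2 - 2 * ⟪phi a ξ, x⟫ + ‖phi a ξ‖ ^ 2 := by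
    rw [norm_sub_sq_real, real_inner_comm (phi a ξ) x]
  rw [e1, e2, norm_phi_sq hx, norm_phi_sq hsξ, inner_phi hx ξ, inner_phi hsξ x,
    norm_sub_sq_real a x, norm_sub_sq_real a ξ, hX2, real_inner_comm x ξ]
  unfold s2 at hx hsξ ⊢
  rw [hX2] at hsξ ⊢
  simp only [mul_one] at hsξ ⊢
  generalize ht : (⟪a, x⟫ : ℝ) = t at hx ⊢
  generalize hw : (⟪a, ξ⟫ : ℝ) = w at hsξ ⊢
  generalize hp : (⟪x, ξ⟫ : ℝ) = p at *
  have h1 : 1 + ‖a‖ ^ 2 * ‖x‖ ^ 2 - 2 * t ≠ 0 := ne_of_gt hx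
  have h2 : 1 + ‖a‖ ^ 2 - 2 * w ≠ 0 := ne_of_gt hsξ
  field_simp
  ring

lemma f_eq {a ξ : E} (ha : ‖a‖ < 1) (hξ : ‖ξ‖ = 1) (c : ℝ) {x : E} (hx : ‖x‖ < 1)
    (hn : 2 ≤ n) :
    c * (bracket (phi a x) a) ^ (n - 2) * poisson ξ (phi a x)
      = (c * (1 - ‖a‖ ^ 2) ^ (n - 1) / bracket ξ a ^ n) * poisson (phi a ξ) x := by
  have hsx : 0 < s2 a x := s2_pos (by nlinarith [norm_nonneg a, norm_nonneg x])
  have hsξ : 0 < s2 a ξ := s2_pos (by rw [hξ]; simpa using ha)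
  have hbx := bracket_pos hsx
  have hbξ := bracket_pos hsξ
  have hζ : ‖phi a ξ‖ = 1 := by
    have h1 : ‖phi a ξ‖ ^ 2 = 1 := by
      rw [norm_phi_sq hsξ, ← s2_unit hξ, div_self (ne_of_gt hsξ)]
    rw [← Real.sqrt_sq (norm_nonneg (phi a ξ)), h1, Real.sqrt_one]
  have hdζ : (0:ℝ) < ‖x - phi a ξ‖ := by
    rw [norm_sub_pos_iff]
    intro hcon
    rw [hcon, hζ] at hx
    exact absurd hx (by norm_num)
  have hK : (0:ℝ) < 1 - ‖a‖ ^ 2 := by nlinarith [norm_nonneg a]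
  have hkey : ‖phi a x - ξ‖ * bracket x a = bracket ξ a * ‖x - phi a ξ‖ := by
    refine sq_eq_of_nonneg (by positivity) (by positivity) ?_
    rw [mul_pow, mul_pow, bracket_sq hsx, bracket_sq hsξ, dist_phi_xi hsx hξ hsξ]
    field_simp
  have hd : ‖phi a x - ξ‖ = bracket ξ a * ‖x - phi a ξ‖ / bracket x a := by
    rw [← hkey]; field_simp
  rw [poisson, poisson, bracket_phi ha hsx, one_sub_norm_phi_sq hsx, hd, ← bracket_sq hsx]
  obtain ⟨m, rfl⟩ : ∃ m, n = m + 2 := ⟨n - 2, by omega⟩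
  simp only [Nat.add_sub_cancel]
  have h1 : m + 2 - 1 = m + 1 := by omega
  rw [h1]
  simp only [div_pow]
  field_simp
  ring

noncomputable def inSL : E →L[ℝ] E →L[ℝ] ℝ := innerSL ℝ

@[simp] lemma inSL_apply (v w : E) : inSL v w = ⟪v, w⟫ := rfl

/-- `gf ζ y = ⟪y - ζ, y - ζ⟫`. -/
noncomputable def gf (ζ y : E) : ℝ := ⟪y - ζ, y - ζ⟫

lemma gf_eq_norm (ζ y : E) : gf ζ y = ‖y - ζ‖ ^ 2 := real_inner_self_eq_norm_sq _

/-- The function `Qf ζ C q y = C (1 - |y|²) ⟪y-ζ,y-ζ⟫^q`. -/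
noncomputable def Qf (ζ : E) (C q : ℝ) (y : E) : ℝ := C * (1 - ⟪y, y⟫) * gf ζ y ^ q

lemma poisson_eq_rpow (hn : 2 ≤ n) (ζ y : E) :
    poisson ζ y = (1 - ⟪y, y⟫) * gf ζ y ^ (-(n : ℝ) / 2) := by
  have hr : -(n : ℝ) / 2 ≠ 0 := by
    have h0 : (0:ℝ) < (n : ℝ) := by exact_mod_cast (by omega : 0 < n)
    intro hcon
    rw [div_eq_zero_iff] at hcon
    rcases hcon with hcon | hcon <;> nlinarith
  rcases eq_or_ne y ζ with h | h
  · subst h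
    rw [poisson, gf, sub_self, inner_zero_left, Real.zero_rpow hr, mul_zero, norm_zero,
      zero_pow (by omega : n ≠ 0), div_zero]
  · rw [poisson, gf_eq_norm, real_inner_self_eq_norm_sq]
    have hpos : (0:ℝ) < ‖y - ζ‖ := by
      rw [norm_sub_pos_iff]; exact h
    have hkey : ((‖y - ζ‖ ^ 2 : ℝ)) ^ (-(n : ℝ) / 2) = (‖y - ζ‖ ^ n)⁻¹ := by
      rw [← Real.rpow_natCast (‖y - ζ‖) 2, ← Real.rpow_natCast (‖y - ζ‖) n,
        ← Real.rpow_mul (norm_nonneg _), ← Real.rpow_neg (norm_nonneg _)]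
      congr 1
      ring
    rw [hkey, div_eq_mul_inv]

lemma hasFDerivAt_inner_self (x : E) :
    HasFDerivAt (fun y : E => (⟪y, y⟫ : ℝ)) ((2 : ℝ) • inSL x) x := by
  have h := (hasFDerivAt_id x).inner ℝ (hasFDerivAt_id x)
  refine h.congr_fderiv ?_
  ext v
  simp only [ContinuousLinearMap.smul_apply, inSL_apply, smul_eq_mul,
    ContinuousLinearMap.comp_apply, ContinuousLinearMap.prod_apply,
    ContinuousLinearMap.id_apply, fderivInnerCLM_apply, id_eq]
  rw [real_inner_comm x v]
  ring

lemma hasFDerivAt_gf (ζ x : E) : HasFDerivAt (gf ζ) ((2 : ℝ) • inSL (x - ζ)) x := by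
  have h0 : HasFDerivAt (fun y : E => y - ζ) (ContinuousLinearMap.id ℝ _) x :=
    (hasFDerivAt_id x).sub_const ζ
  have h := h0.inner ℝ h0
  refine h.congr_fderiv ?_
  ext v
  simp only [ContinuousLinearMap.smul_apply, inSL_apply, smul_eq_mul,
    ContinuousLinearMap.comp_apply, ContinuousLinearMap.prod_apply,
    ContinuousLinearMap.id_apply, fderivInnerCLM_apply, id_eq]
  rw [real_inner_comm (x - ζ) v]
  ring

lemma hasFDerivAt_gf_rpow (ζ x : E) (r : ℝ) (hg : gf ζ x ≠ 0) :
    HasFDerivAt (fun y => gf ζ y ^ r) ((2 * r * gf ζ x ^ (r - 1)) • inSL (x - ζ)) x := by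
  have h := (Real.hasDerivAt_rpow_const (p := r) (Or.inl hg)).comp_hasFDerivAt x
    (hasFDerivAt_gf ζ x)
  refine h.congr_fderiv ?_
  ext v
  simp only [ContinuousLinearMap.smul_apply, inSL_apply, smul_eq_mul]
  ring

lemma hasFDerivAt_mulu (C : ℝ) (x : E) :
    HasFDerivAt (fun y : E => C * (1 - ⟪y, y⟫)) ((-2 * C) • inSL x) x := by
  have h := (((hasFDerivAt_inner_self x).const_sub (1:ℝ)).const_mul C)
  refine h.congr_fderiv ?_
  ext v
  simp only [ContinuousLinearMap.smul_apply, inSL_apply, smul_eq_mul,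
    ContinuousLinearMap.neg_apply]
  ring

/-- The Fréchet derivative of `Qf` as an explicit continuous linear map. -/
noncomputable def DQ (ζ : E) (C q : ℝ) (x : E) : E →L[ℝ] ℝ :=
  (-2 * C * gf ζ x ^ q) • inSL x
    + (2 * q * C * (1 - ⟪x, x⟫) * gf ζ x ^ (q - 1)) • inSL (x - ζ)

lemma hasFDerivAt_Qf {ζ x : E} (C q : ℝ) (hg : gf ζ x ≠ 0) :
    HasFDerivAt (Qf ζ C q) (DQ ζ C q x) x := by
  have h := (hasFDerivAt_mulu C x).mul (hasFDerivAt_gf_rpow ζ x q hg)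
  refine h.congr_fderiv ?_
  ext v
  simp only [DQ, ContinuousLinearMap.add_apply, ContinuousLinearMap.smul_apply, inSL_apply,
    smul_eq_mul]
  ring

lemma sum_inner_single_mul (v w : E) :
    ∑ i : Fin n, (⟪v, EuclideanSpace.single i (1:ℝ)⟫ * ⟪w, EuclideanSpace.single i (1:ℝ)⟫ : ℝ)
      = ⟪v, w⟫ := by
  simp only [EuclideanSpace.inner_single_right, conj_trivial, mul_one]
  rw [PiLp.inner_apply]
  simp [RCLike.inner_apply, conj_trivial, mul_comm]

lemma sum_inner_single_self :
    ∑ i : Fin n, (⟪(EuclideanSpace.single i (1:ℝ) : E), EuclideanSpace.single i (1:ℝ)⟫ : ℝ)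
      = n := by
  simp [EuclideanSpace.inner_single_right, EuclideanSpace.single_apply]

lemma gf_pos {ζ x : E} (hg : gf ζ x ≠ 0) : 0 < gf ζ x := by
  rcases lt_or_eq_of_le (real_inner_self_nonneg (x := x - ζ)) with h | h
  · exact h
  · exact absurd h.symm hg

lemma lap_Qf {ζ : E} (x : E) (C q : ℝ) (hζ : ‖ζ‖ = 1) (hq : q = -(n:ℝ)/2)
    (hg : gf ζ x ≠ 0) : lap (Qf ζ C q) x = 0 := by
  have hGpos := gf_pos hg
  have hU : IsOpen {y : E | gf ζ y ≠ 0} := by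
    have hc : Continuous (gf ζ) := by
      unfold gf
      exact (continuous_id.sub continuous_const).inner (continuous_id.sub continuous_const)
    exact isOpen_ne_fun hc continuous_const
  have hev : fderiv ℝ (Qf ζ C q) =ᶠ[𝓝 x] DQ ζ C q := by
    filter_upwards [hU.mem_nhds hg] with y hy
    exact (hasFDerivAt_Qf C q hy).fderiv
  have h2 : fderiv ℝ (fderiv ℝ (Qf ζ C q)) x = fderiv ℝ (DQ ζ C q) x := hev.fderiv_eq
  have hi1 : HasFDerivAt (fun y : E => inSL y) inSL x := inSL.hasFDerivAt
  have hi2 : HasFDerivAt (fun y : E => inSL (y - ζ)) inSL x := by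
    exact inSL.hasFDerivAt.comp x ((hasFDerivAt_id x).sub_const ζ)
  have hα : HasFDerivAt (fun y => -2 * C * gf ζ y ^ q)
      ((-2 * C) • ((2 * q * gf ζ x ^ (q-1)) • inSL (x - ζ))) x :=
    (hasFDerivAt_gf_rpow ζ x q hg).const_mul (-2*C)
  have hβ := (hasFDerivAt_mulu (2*q*C) x).mul (hasFDerivAt_gf_rpow ζ x (q-1) hg)
  have hM : HasFDerivAt (DQ ζ C q) _ x := (hα.smul hi1).add (hβ.smul hi2)
  have h3 := hM.fderiv
  rw [lap]
  rw [h2, h3]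
  simp only [ContinuousLinearMap.add_apply, ContinuousLinearMap.smul_apply,
    ContinuousLinearMap.smulRight_apply, inSL_apply, smul_eq_mul, add_mul, mul_assoc, Pi.mul_apply]
  simp only [Finset.sum_add_distrib]
  simp only [← Finset.mul_sum]
  rw [sum_inner_single_mul, sum_inner_single_mul, sum_inner_single_mul, sum_inner_single_self]
  have hζ2 : (⟪ζ, ζ⟫ : ℝ) = 1 := by
    rw [real_inner_self_eq_norm_sq, hζ]; norm_num
  have e1 : gf ζ x ^ q = gf ζ x ^ (q-1) * gf ζ x := by
    rw [← Real.rpow_add_one hg (q-1), sub_add_cancel]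
  have e2 : gf ζ x ^ (q-1) = gf ζ x ^ (q-1-1) * gf ζ x := by
    rw [← Real.rpow_add_one hg (q-1-1), sub_add_cancel]
  rw [e1, e2]
  simp only [gf, inner_sub_left, inner_sub_right, real_inner_comm x ζ, hζ2]
  subst hq
  ring

lemma sq_eq_of_nonneg' {u v : ℝ} (hu : 0 ≤ u) (hv : 0 ≤ v) (h : u ^ 2 = v ^ 2) : u = v := by
  rw [← Real.sqrt_sq hu, h, Real.sqrt_sq hv]

lemma gf_ne_zero {ζ x : E} (hζ : ‖ζ‖ = 1) (hx : ‖x‖ < 1) : gf ζ x ≠ 0 := by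
  rw [gf_eq_norm]
  have : x ≠ ζ := by
    intro h; rw [h, hζ] at hx; exact absurd hx (by norm_num)
  have h2 : (0:ℝ) < ‖x - ζ‖ := by rw [norm_sub_pos_iff]; exact this
  positivity

lemma hasGradientAt_Qf {ζ x : E} (C q : ℝ) (hg : gf ζ x ≠ 0) :
    HasGradientAt (Qf ζ C q)
      ((-2 * C * gf ζ x ^ q) • x + (2 * q * C * (1 - ⟪x, x⟫) * gf ζ x ^ (q - 1)) • (x - ζ)) x := by
  rw [hasGradientAt_iff_hasFDerivAt]
  have h := hasFDerivAt_Qf (ζ := ζ) (x := x) C q hg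
  refine h.congr_fderiv ?_
  ext w
  simp only [InnerProductSpace.toDual_apply_apply, DQ, ContinuousLinearMap.add_apply,
    ContinuousLinearMap.smul_apply, inSL_apply, smul_eq_mul, inner_add_left,
    real_inner_smul_left]

lemma contDiffAt_Qf {ζ x : E} (C q : ℝ) (hg : gf ζ x ≠ 0) :
    ContDiffAt ℝ 2 (Qf ζ C q) x := by
  unfold Qf gf
  apply ContDiffAt.mul
  · exact contDiffAt_const.mul
      (contDiffAt_const.sub ((contDiff_id.inner ℝ contDiff_id).contDiffAt))
  · exact ContDiffAt.rpow_const_of_ne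
      (((contDiff_id.sub contDiff_const).inner ℝ (contDiff_id.sub contDiff_const)).contDiffAt) hg

lemma Qf_pos {ζ x : E} {C q : ℝ} (hC : 0 < C) (hx : ‖x‖ < 1) (hζ : ‖ζ‖ = 1) :
    0 < Qf ζ C q x := by
  have hg := gf_ne_zero hζ hx
  have hG := gf_pos hg
  have hu : (0:ℝ) < 1 - ⟪x, x⟫ := by
    rw [real_inner_self_eq_norm_sq]; nlinarith [norm_nonneg x]
  unfold Qf
  have := Real.rpow_pos_of_pos hG q
  positivity

lemma grad_norm_Qf {ζ x : E} (hζ : ‖ζ‖ = 1) {C q : ℝ} (hq : q = -(n:ℝ)/2) (hC : 0 < C)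
    (hx : ‖x‖ < 1) :
    ‖(‖x‖ ^ 2 - 1) • ((-2 * C * gf ζ x ^ q) • x
          + (2 * q * C * (1 - ⟪x, x⟫) * gf ζ x ^ (q - 1)) • (x - ζ))
        + (((n:ℝ) - 2) * Qf ζ C q x) • x‖ = (n:ℝ) * Qf ζ C q x := by
  have hg := gf_ne_zero hζ hx
  have hG := gf_pos hg
  have hζ2 : (⟪ζ, ζ⟫ : ℝ) = 1 := by
    rw [real_inner_self_eq_norm_sq, hζ]; norm_num
  have e1 : gf ζ x ^ q = gf ζ x ^ (q-1) * gf ζ x := by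
    rw [← Real.rpow_add_one hg (q-1), sub_add_cancel]
  have hGexp : gf ζ x = ⟪x, x⟫ - 2 * ⟪x, ζ⟫ + 1 := by
    unfold gf
    simp only [inner_sub_left, inner_sub_right, real_inner_comm x ζ, hζ2]
    ring
  have hvec : (‖x‖ ^ 2 - 1) • ((-2 * C * gf ζ x ^ q) • x
          + (2 * q * C * (1 - ⟪x, x⟫) * gf ζ x ^ (q - 1)) • (x - ζ))
        + (((n:ℝ) - 2) * Qf ζ C q x) • x
      = ((n:ℝ) * C * (1 - ⟪x, x⟫) * (gf ζ x ^ (q-1) * gf ζ x)) • x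
        + ((n:ℝ) * C * (1 - ⟪x, x⟫) ^ 2 * gf ζ x ^ (q-1)) • (x - ζ) := by
    rw [← real_inner_self_eq_norm_sq x]
    unfold Qf
    rw [e1]
    subst hq
    match_scalars <;> ring
  rw [hvec]
  have hQ : (0:ℝ) < Qf ζ C q x := Qf_pos hC hx hζ
  refine sq_eq_of_nonneg' (norm_nonneg _) (by positivity) ?_
  rw [norm_add_sq_real, norm_smul, norm_smul, real_inner_smul_left, real_inner_smul_right,
    mul_pow, mul_pow, Real.norm_eq_abs, Real.norm_eq_abs, sq_abs, sq_abs,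
    ← real_inner_self_eq_norm_sq x, ← real_inner_self_eq_norm_sq (x - ζ),
    show (⟪x - ζ, x - ζ⟫ : ℝ) = gf ζ x from rfl]
  unfold Qf
  rw [e1]
  simp only [inner_sub_right, real_inner_comm x ζ]
  rw [hGexp]
  ring

end ExtremalAux

/-- Every function `f(x) = c·[φ_a(x),a]^{n−2}·P_ξ(φ_a(x))` with `c > 0`, `a ∈ B_n` and `ξ` on
the unit sphere is positive and harmonic on `B_n` and attains equality
`|(|x|²−1)∇f(x) + (n−2) x f(x)| = n f(x)` everywhere on `B_n`. -/
theorem extremal_function_attains_equality {n : ℕ} (hn : 2 ≤ n)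
    (a ξ : EuclideanSpace ℝ (Fin n)) (ha : a ∈ ball (0 : EuclideanSpace ℝ (Fin n)) 1)
    (hξ : ‖ξ‖ = 1) (c : ℝ) (hc : 0 < c)
    (f : EuclideanSpace ℝ (Fin n) → ℝ)
    (hfdef : ∀ x, f x = c * (bracket (phi a x) a) ^ (n - 2) * poisson ξ (phi a x)) :
    (∀ x ∈ ball (0 : EuclideanSpace ℝ (Fin n)) 1, 0 < f x) ∧
      IsHarmonicOnBall f ∧
      ∀ x ∈ ball (0 : EuclideanSpace ℝ (Fin n)) 1,
        ‖(‖x‖ ^ 2 - 1) • gradient f x + (((n : ℝ) - 2) * f x) • x‖ = (n : ℝ) * f x := by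
  classical
  rw [mem_ball, dist_zero_right] at ha
  set ζ := phi a ξ with hζdef
  have hsξ : 0 < ExtremalAux.s2 a ξ := ExtremalAux.s2_pos (by rw [hξ]; simpa using ha)
  have hζ : ‖ζ‖ = 1 := by
    have h1 : ‖ζ‖ ^ 2 = 1 := by
      rw [hζdef, ExtremalAux.norm_phi_sq hsξ, ← ExtremalAux.s2_unit hξ, div_self (ne_of_gt hsξ)]
    rw [← Real.sqrt_sq (norm_nonneg ζ), h1, Real.sqrt_one]
  set C := c * (1 - ‖a‖ ^ 2) ^ (n - 1) / bracket ξ a ^ n with hCdef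
  have hbξ : 0 < bracket ξ a := ExtremalAux.bracket_pos hsξ
  have hK : (0:ℝ) < 1 - ‖a‖ ^ 2 := by nlinarith [norm_nonneg a]
  have hC : 0 < C := by rw [hCdef]; positivity
  set q : ℝ := -(n:ℝ)/2 with hqdef
  have hfQ : ∀ y ∈ ball (0 : EuclideanSpace ℝ (Fin n)) 1, f y = ExtremalAux.Qf ζ C q y := by
    intro y hy
    rw [mem_ball, dist_zero_right] at hy
    rw [hfdef y, ExtremalAux.f_eq ha hξ c hy hn, ← hζdef, ← hCdef,
      ExtremalAux.poisson_eq_rpow hn ζ y]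
    rw [ExtremalAux.Qf, ← hqdef]
    ring
  have hball : ∀ x ∈ ball (0 : EuclideanSpace ℝ (Fin n)) 1, ‖x‖ < 1 := by
    intro x hx
    rwa [mem_ball, dist_zero_right] at hx
  have hpos : ∀ x ∈ ball (0 : EuclideanSpace ℝ (Fin n)) 1, 0 < f x := by
    intro x hx
    rw [hfQ x hx]
    exact ExtremalAux.Qf_pos hC (hball x hx) hζ
  refine ⟨hpos, ⟨?_, ?_⟩, ?_⟩
  · refine ContDiffOn.congr ?_ hfQ
    intro y hy
    exact (ExtremalAux.contDiffAt_Qf C q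
      (ExtremalAux.gf_ne_zero hζ (hball y hy))).contDiffWithinAt
  · intro x hx
    have hev : f =ᶠ[nhds x] ExtremalAux.Qf ζ C q := by
      filter_upwards [isOpen_ball.mem_nhds hx] with y hy using hfQ y hy
    have h1 : fderiv ℝ f =ᶠ[nhds x] fderiv ℝ (ExtremalAux.Qf ζ C q) := hev.fderiv
    have h2 : fderiv ℝ (fderiv ℝ f) x = fderiv ℝ (fderiv ℝ (ExtremalAux.Qf ζ C q)) x :=
      h1.fderiv_eq
    have hlap : lap f x = lap (ExtremalAux.Qf ζ C q) x := by
      simp only [lap]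
      rw [h2]
    rw [hlap]
    exact ExtremalAux.lap_Qf x C q hζ hqdef (ExtremalAux.gf_ne_zero hζ (hball x hx))
  · intro x hx
    have hx' := hball x hx
    have hg := ExtremalAux.gf_ne_zero hζ hx'
    have hev : f =ᶠ[nhds x] ExtremalAux.Qf ζ C q := by
      filter_upwards [isOpen_ball.mem_nhds hx] with y hy using hfQ y hy
    have hgrad : gradient f x = gradient (ExtremalAux.Qf ζ C q) x := hev.gradient_eq
    rw [hfQ x hx, hgrad, (ExtremalAux.hasGradientAt_Qf C q hg).gradient]
    exact ExtremalAux.grad_norm_Qf hζ hqdef hC hx'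
end

section
/- For every integer n ≥ 2 and all x, y in the open unit ball B_n of ℝ^n, one has (1 + |φ_y(x)|)/(1 − |φ_y(x)|) ≥ (1 − |y|²)/(1 − |x|²). -/
open Metric EuclideanSpace Real

set_option maxHeartbeats 1000000 in
lemma aux_real (s r p d b : ℝ) (hs0 : 0 ≤ s) (hs : s < 1) (hr0 : 0 ≤ r) (hr : r < 1)
    (hp : p ≤ s * r) (hd0 : 0 ≤ d) (hb0 : 0 ≤ b)
    (hd2 : d ^ 2 = s ^ 2 - 2 * p + r ^ 2) (hb2 : b ^ 2 = 1 + r ^ 2 * s ^ 2 - 2 * p) :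
    (1 - r ^ 2) / (1 - s ^ 2) ≤ (1 + d / b) / (1 - d / b) := by
  have hs2 : s ^ 2 < 1 := by nlinarith
  have hr2 : r ^ 2 < 1 := by nlinarith
  have hprod : (b + d) * (b - d) = (1 - s ^ 2) * (1 - r ^ 2) := by linear_combination hb2 - hd2
  have hbd : d < b := by
    nlinarith [mul_pos (by nlinarith : (0:ℝ) < 1 - s ^ 2)
      (by nlinarith : (0:ℝ) < 1 - r ^ 2)]
  have hbpos : 0 < b := lt_of_le_of_lt hd0 hbd
  have h2b : 2 - s ^ 2 - r ^ 2 ≤ 2 * b := by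
    have hc0 : (0:ℝ) ≤ 1 - (s ^ 2 + r ^ 2) / 2 := by nlinarith
    have hcb : (1 - (s ^ 2 + r ^ 2) / 2) ^ 2 ≤ b ^ 2 := by
      nlinarith [sq_nonneg (s - r), mul_nonneg (sq_nonneg (s - r))
        (show (0:ℝ) ≤ 4 - (s + r) ^ 2 by nlinarith)]
    nlinarith [hcb, hc0, hb0]
  have hsq : (b - (1 - r ^ 2)) ^ 2 ≤ d ^ 2 := by nlinarith
  have key : 1 - r ^ 2 ≤ b + d := by nlinarith [hsq, hd0, hbpos]
  have e1 : 1 - d / b = (b - d) / b := by field_simp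
  have e2 : 1 + d / b = (b + d) / b := by field_simp
  have e3 : (1 + d / b) / (1 - d / b) = (b + d) / (b - d) := by
    rw [e1, e2]
    rw [div_div_div_eq]
    rw [mul_comm b (b - d), mul_div_mul_right _ _ (ne_of_gt hbpos)]
  rw [e3, div_le_div_iff₀ (by nlinarith) (by nlinarith : (0:ℝ) < b - d)]
  nlinarith [key, hprod, mul_pos (show (0:ℝ) < b + d by nlinarith)
    (show (0:ℝ) < 1 - s ^ 2 by nlinarith),
    mul_le_mul key key (by nlinarith : (0:ℝ) ≤ 1 - r ^ 2) (by nlinarith : (0:ℝ) ≤ b + d)]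

set_option maxHeartbeats 1000000 in
/-- For `x, y` in the unit ball, `(1+|φ_y(x)|)/(1−|φ_y(x)|) ≥ (1−|y|²)/(1−|x|²)`. -/
theorem moebius_quotient_inequality {n : ℕ} (hn : 2 ≤ n) :
    ∀ x ∈ ball (0 : EuclideanSpace ℝ (Fin n)) 1,
      ∀ y ∈ ball (0 : EuclideanSpace ℝ (Fin n)) 1,
        (1 - ‖y‖ ^ 2) / (1 - ‖x‖ ^ 2) ≤ (1 + ‖phi y x‖) / (1 - ‖phi y x‖) := by
  intro x hx y hy
  rw [mem_ball_zero_iff] at hx hy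
  have hcomm : (inner ℝ y x : ℝ) = inner ℝ x y := real_inner_comm x y
  have hple : (inner ℝ x y : ℝ) ≤ ‖x‖ * ‖y‖ := real_inner_le_norm x y
  have hd2 : ‖x - y‖ ^ 2 = ‖x‖ ^ 2 - 2 * inner ℝ x y + ‖y‖ ^ 2 := norm_sub_sq_real x y
  have harg : (0:ℝ) ≤ 1 + ‖y‖ ^ 2 * ‖x‖ ^ 2 - 2 * inner ℝ y x := by
    rw [hcomm]
    nlinarith [sq_nonneg ‖x - y‖, hd2, mul_pos (by nlinarith [norm_nonneg x] : (0:ℝ) < 1 - ‖x‖ ^ 2)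
      (by nlinarith [norm_nonneg y] : (0:ℝ) < 1 - ‖y‖ ^ 2)]
  have hb2 : bracket x y ^ 2 = 1 + ‖y‖ ^ 2 * ‖x‖ ^ 2 - 2 * inner ℝ x y := by
    rw [bracket, Real.sq_sqrt harg, hcomm]
  have hb0 : 0 ≤ bracket x y := Real.sqrt_nonneg _
  have hiy : (inner ℝ (y - x) y : ℝ) = ‖y‖ ^ 2 - inner ℝ x y := by
    rw [inner_sub_left, real_inner_self_eq_norm_sq]
  have hyx : ‖y - x‖ = ‖x - y‖ := norm_sub_rev y x
  have hv : ‖(1 - ‖y‖ ^ 2) • (y - x) + ‖y - x‖ ^ 2 • y‖ ^ 2 = (‖x - y‖ * bracket x y) ^ 2 := by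
    rw [@norm_add_sq_real, norm_smul, norm_smul, real_inner_smul_left,
      real_inner_smul_right, hiy, hyx]
    simp only [Real.norm_eq_abs]
    rw [mul_pow, mul_pow, sq_abs, sq_abs]
    linear_combination (‖x - y‖ ^ 2 * ‖y‖ ^ 2) * hd2 - ‖x - y‖ ^ 2 * hb2
  have hvnorm : ‖(1 - ‖y‖ ^ 2) • (y - x) + ‖y - x‖ ^ 2 • y‖ = ‖x - y‖ * bracket x y := by
    have h1 : ‖(1 - ‖y‖ ^ 2) • (y - x) + ‖y - x‖ ^ 2 • y‖ =
        Real.sqrt (‖(1 - ‖y‖ ^ 2) • (y - x) + ‖y - x‖ ^ 2 • y‖ ^ 2) :=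
      (Real.sqrt_sq (norm_nonneg _)).symm
    rw [h1, hv, Real.sqrt_sq (by positivity)]
  have hbpos : 0 < bracket x y := by
    nlinarith [hb2, sq_nonneg ‖x - y‖, hd2, norm_nonneg x, norm_nonneg y,
      mul_pos (by nlinarith [norm_nonneg x] : (0:ℝ) < 1 - ‖x‖ ^ 2)
      (by nlinarith [norm_nonneg y] : (0:ℝ) < 1 - ‖y‖ ^ 2)]
  have hphi : ‖phi y x‖ = ‖x - y‖ / bracket x y := by
    rw [phi, norm_smul, hvnorm, Real.norm_eq_abs, abs_inv, abs_of_nonneg (sq_nonneg _)]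
    field_simp
  rw [hphi]
  exact aux_real ‖x‖ ‖y‖ (inner ℝ x y) ‖x - y‖ (bracket x y) (norm_nonneg x) hx
    (norm_nonneg y) hy hple (norm_nonneg _) hb0 hd2 hb2
end

section
/- Let n ≥ 2 and let x, y be points of the open unit ball B_n of ℝ^n with |x| ≥ |y|. Then (1 + |x|²|y|² − 2⟨x,y⟩)^{1/2} + |x − y| ≥ 1 − |y|². -/
open Metric EuclideanSpace Real

/-- For `x, y` in the unit ball with `|x| ≥ |y|`,
`(1 + |x|²|y|² − 2⟨x,y⟩)^{1/2} + |x − y| ≥ 1 − |y|²`. -/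
theorem bracket_plus_dist_inequality {n : ℕ} (hn : 2 ≤ n)
    (x y : EuclideanSpace ℝ (Fin n)) (hx : x ∈ ball (0 : EuclideanSpace ℝ (Fin n)) 1)
    (hy : y ∈ ball (0 : EuclideanSpace ℝ (Fin n)) 1) (hxy : ‖y‖ ≤ ‖x‖) :
    1 - ‖y‖ ^ 2 ≤ Real.sqrt (1 + ‖x‖ ^ 2 * ‖y‖ ^ 2 - 2 * inner ℝ x y) + ‖x - y‖ := by
  rw [mem_ball_zero_iff] at hx hy
  have hnsq : ‖x - y‖ ^ 2 = ‖x‖ ^ 2 - 2 * inner ℝ x y + ‖y‖ ^ 2 := by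
    rw [@norm_sub_sq_real]
  have hd0 : (0:ℝ) ≤ ‖x - y‖ := norm_nonneg _
  have hb0 : (0:ℝ) ≤ ‖y‖ := norm_nonneg _
  have habd : ‖x‖ - ‖y‖ ≤ ‖x - y‖ := by
    have := abs_norm_sub_norm_le x y
    have := le_abs_self (‖x‖ - ‖y‖)
    linarith
  have hE : 1 + ‖x‖ ^ 2 * ‖y‖ ^ 2 - 2 * inner ℝ x y
      = ‖x - y‖ ^ 2 + (1 - ‖x‖ ^ 2) * (1 - ‖y‖ ^ 2) := by
    rw [hnsq]; ring
  rcases le_or_gt (1 - ‖y‖ ^ 2) ‖x - y‖ with h | h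
  · have := Real.sqrt_nonneg (1 + ‖x‖ ^ 2 * ‖y‖ ^ 2 - 2 * inner ℝ x y)
    linarith
  · have key : (1 - ‖y‖ ^ 2 - ‖x - y‖) ^ 2 ≤ 1 + ‖x‖ ^ 2 * ‖y‖ ^ 2 - 2 * inner ℝ x y := by
      rw [hE]
      nlinarith [mul_nonneg (sub_nonneg.2 hxy) hd0,
        mul_nonneg (mul_nonneg (sub_nonneg.2 (le_of_lt hy)) (sub_nonneg.2 (le_of_lt hy))) hd0,
        mul_nonneg (sub_nonneg.2 hxy) (sub_nonneg.2 (le_of_lt hx)),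
        sq_nonneg (‖x‖ - ‖y‖), sq_nonneg (‖x‖ + ‖y‖),
        mul_nonneg (mul_nonneg (sub_nonneg.2 hxy) hb0) (sub_nonneg.2 hy.le)]
    have h0 : 0 ≤ 1 - ‖y‖ ^ 2 - ‖x - y‖ := by linarith
    have h2 : 1 - ‖y‖ ^ 2 - ‖x - y‖ ≤ Real.sqrt (1 + ‖x‖ ^ 2 * ‖y‖ ^ 2 - 2 * inner ℝ x y) := by
      calc 1 - ‖y‖ ^ 2 - ‖x - y‖ = Real.sqrt ((1 - ‖y‖ ^ 2 - ‖x - y‖) ^ 2) :=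
            (Real.sqrt_sq h0).symm
        _ ≤ _ := Real.sqrt_le_sqrt key
    linarith
end
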